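/- arXiv:0911.0567 — 3 statements merged into one kernel-verified Lean document; each statement's English description precedes it below -/
import Mathlib

section
/- For the depolarizing channels κ_{d,p} and κ_{d,q} on d-dimensional states (with p,q ∈ [0,1]), the superfidelity between their Jamiołkowski states equals G = (1/d²)·(1 + (d²-1)pq + (d²-1)·√((1-p²)(1-q²))). -/
open Matrix ComplexOrder

noncomputable def sG {n : Type*} [Fintype n]
    (ρ σ : Matrix n n ℂ) : ℝ :=
  (trace (ρ * σ)).re +
    Real.sqrt (1 - (trace (ρ * ρ)).re) * Real.sqrt (1 - (trace (σ * σ)).re)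

/-- The Jamiołkowski state of the depolarizing channel κ_{d,p}:
ρ = p·|Ω⟩⟨Ω| + (1-p)·𝟙/d², where |Ω⟩ is the maximally entangled state. -/
noncomputable def depolJam (d : ℕ) (p : ℝ) :
    Matrix (Fin d × Fin d) (Fin d × Fin d) ℂ :=
  (p : ℂ) • (Matrix.of fun a b =>
      if a.1 = a.2 ∧ b.1 = b.2 then (1 : ℂ) / d else 0) +
    (((1 - p : ℝ) : ℂ) / (d ^ 2 : ℂ)) • (1 : Matrix (Fin d × Fin d) (Fin d × Fin d) ℂ)

noncomputable def Omega (d : ℕ) : Matrix (Fin d × Fin d) (Fin d × Fin d) ℂ :=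
  Matrix.of fun a b => if a.1 = a.2 ∧ b.1 = b.2 then (1 : ℂ) / d else 0

lemma Omega_mul (d : ℕ) (hd : 0 < d) : Omega d * Omega d = Omega d := by
  have hdC : (d : ℂ) ≠ 0 := Nat.cast_ne_zero.mpr hd.ne'
  ext a b
  simp only [Omega, mul_apply, of_apply]
  by_cases hP : a.1 = a.2 <;> by_cases hQ : b.1 = b.2 <;>
    simp [hP, hQ, Fintype.sum_prod_type, Finset.sum_ite_eq, Finset.mul_sum]
  field_simp

lemma trace_Omega (d : ℕ) (hd : 0 < d) : trace (Omega d) = 1 := by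
  have hdC : (d : ℂ) ≠ 0 := Nat.cast_ne_zero.mpr hd.ne'
  simp [Matrix.trace, Omega, Matrix.diag, Fintype.sum_prod_type, Finset.sum_ite_eq]
  field_simp

lemma tr_mul_depol (d : ℕ) (hd : 0 < d) (p q : ℝ) :
    trace (depolJam d p * depolJam d q) =
      (((1 + ((d : ℝ) ^ 2 - 1) * p * q) / (d : ℝ) ^ 2 : ℝ) : ℂ) := by
  have hdC : (d : ℂ) ≠ 0 := Nat.cast_ne_zero.mpr hd.ne'
  have hΩ : (Matrix.of fun a b : Fin d × Fin d =>
      if a.1 = a.2 ∧ b.1 = b.2 then (1 : ℂ) / d else 0) = Omega d := rfl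
  rw [depolJam, depolJam, hΩ]
  simp only [mul_add, add_mul, smul_mul_assoc, mul_smul_comm, trace_add, trace_smul,
    Omega_mul d hd, Matrix.one_mul, Matrix.mul_one, trace_Omega d hd, trace_one]
  have hcard : (Fintype.card (Fin d × Fin d) : ℂ) = (d : ℂ) ^ 2 := by
    simp [Fintype.card_prod]; ring
  rw [hcard]
  push_cast
  field_simp
  ring_nf; field_simp; ring

theorem superfidelity_depolarizing (d : ℕ) (hd : 0 < d)
    (p q : ℝ) (hp0 : 0 ≤ p) (hp1 : p ≤ 1) (hq0 : 0 ≤ q) (hq1 : q ≤ 1) :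
    sG (depolJam d p) (depolJam d q) =
      (1 / (d ^ 2 : ℝ)) *
        (1 + ((d ^ 2 : ℝ) - 1) * p * q +
          ((d ^ 2 : ℝ) - 1) * Real.sqrt ((1 - p ^ 2) * (1 - q ^ 2))) := by
  have hd2 : (0 : ℝ) < (d : ℝ) ^ 2 := by positivity
  have hd1 : (1 : ℝ) ≤ (d : ℝ) := by exact_mod_cast hd
  have hA : (0 : ℝ) ≤ ((d : ℝ) ^ 2 - 1) / (d : ℝ) ^ 2 :=
    div_nonneg (by nlinarith) hd2.le
  have hp2 : (0 : ℝ) ≤ 1 - p ^ 2 := by nlinarith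
  have hq2 : (0 : ℝ) ≤ 1 - q ^ 2 := by nlinarith
  have h1 : ∀ r : ℝ, 1 - (1 + ((d : ℝ) ^ 2 - 1) * r * r) / (d : ℝ) ^ 2 =
      (((d : ℝ) ^ 2 - 1) / (d : ℝ) ^ 2) * (1 - r ^ 2) := by
    intro r; field_simp; ring
  unfold sG
  rw [tr_mul_depol d hd p q, tr_mul_depol d hd p p, tr_mul_depol d hd q q]
  simp only [Complex.ofReal_re]
  rw [h1 p, h1 q, ← Real.sqrt_mul (mul_nonneg hA hp2),
    show ((d : ℝ) ^ 2 - 1) / (d : ℝ) ^ 2 * (1 - p ^ 2) *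
        (((d : ℝ) ^ 2 - 1) / (d : ℝ) ^ 2 * (1 - q ^ 2)) =
      (((d : ℝ) ^ 2 - 1) / (d : ℝ) ^ 2) ^ 2 * ((1 - p ^ 2) * (1 - q ^ 2)) by ring,
    Real.sqrt_mul (sq_nonneg _), Real.sqrt_sq hA]
  field_simp
end

section
/- For two generalized Pauli channels with probability matrices p, q (entrywise nonnegative d×d matrices summing to 1), the superfidelity between their Jamiołkowski states equals tr(pqᵀ) + √(1 - tr(ppᵀ))·√(1 - tr(qqᵀ)). -/
open Matrix ComplexOrder

/-- Shift matrix X on ℂ^d : X = Σ_j |j-1 mod d⟩⟨j|. -/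
def shiftX (d : ℕ) : Matrix (Fin d) (Fin d) ℂ :=
  Matrix.of fun a b => if ((a : ℕ) + 1) % d = (b : ℕ) then 1 else 0

/-- Clock matrix Z on ℂ^d. -/
noncomputable def clockZ (d : ℕ) : Matrix (Fin d) (Fin d) ℂ :=
  Matrix.diagonal fun j => Complex.exp (2 * Real.pi * Complex.I * (j : ℕ) / d)

/-- Jamiołkowski state of the generalized Pauli channel with probability
matrix p: ρ = Σ_{i,j} p i j · (U_{ij} ⊗ 1)|Ω⟩⟨Ω|(U_{ij} ⊗ 1)†, with
U_{ij} = X^i Z^j; concretely the entries are given via the vectors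
v_{ij}(a,b) = (1/√d)·(X^i Z^j)_{a b}. -/
noncomputable def pauliJam (d : ℕ) (p : Fin d → Fin d → ℝ) :
    Matrix (Fin d × Fin d) (Fin d × Fin d) ℂ :=
  ∑ i, ∑ j, (p i j : ℂ) •
    (Matrix.of fun a b =>
      ((1 / Real.sqrt d : ℝ) : ℂ) * (shiftX d ^ (i : ℕ) * clockZ d ^ (j : ℕ)) a.1 a.2 *
        star (((1 / Real.sqrt d : ℝ) : ℂ) *
          (shiftX d ^ (i : ℕ) * clockZ d ^ (j : ℕ)) b.1 b.2))

lemma shiftX_pow_apply (d : ℕ) (hd : 0 < d) (i : ℕ) (a b : Fin d) :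
    (shiftX d ^ i) a b = if ((a : ℕ) + i) % d = (b : ℕ) then 1 else 0 := by
  induction i generalizing b with
  | zero =>
    simp only [pow_zero, Matrix.one_apply, Nat.add_zero, Nat.mod_eq_of_lt a.isLt]
    simp [Fin.ext_iff]
  | succ n ih =>
    rw [pow_succ, Matrix.mul_apply]
    have key : ∀ c : Fin d, (shiftX d ^ n) a c * shiftX d c b =
        if ((⟨((a:ℕ)+n) % d, Nat.mod_lt _ hd⟩ : Fin d) = c) then shiftX d c b else 0 := by
      intro c
      rw [ih c]
      by_cases h : ((a:ℕ)+n) % d = (c:ℕ)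
      · simp [h, Fin.ext_iff]
      · rw [if_neg h, zero_mul, if_neg (fun hc => h (by simpa [Fin.ext_iff] using hc))]
    rw [Finset.sum_congr rfl (fun c _ => key c), Finset.sum_ite_eq]
    simp only [Finset.mem_univ, if_true]
    show (if ((((a:ℕ)+n)%d : ℕ) + 1) % d = (b:ℕ) then (1:ℂ) else 0) = _
    have : ((((a:ℕ)+n)%d : ℕ) + 1) % d = ((a:ℕ) + (n+1)) % d := by
      conv_rhs => rw [← Nat.add_assoc]
      exact (Nat.ModEq.add_right 1 (Nat.mod_modEq _ _))
    rw [this]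


lemma clockZ_mul_apply (d : ℕ) (i j : ℕ) (a b : Fin d) :
    (shiftX d ^ i * clockZ d ^ j) a b =
      (shiftX d ^ i) a b * Complex.exp (2 * Real.pi * Complex.I * (b : ℕ) / d) ^ j := by
  rw [clockZ, Matrix.diagonal_pow, Matrix.mul_diagonal, Pi.pow_apply]


lemma exp_pow_sum (d : ℕ) (hd : 0 < d) (j l : Fin d) :
    ∑ b : Fin d, Complex.exp (((b:ℕ):ℂ) * ((((l:ℕ):ℂ) - ((j:ℕ):ℂ)) * (2 * Real.pi * Complex.I / d)))
      = if j = l then (d : ℂ) else 0 := by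
  set z : ℂ := 2 * Real.pi * Complex.I / d with hz
  set x : ℂ := Complex.exp ((((l:ℕ):ℂ) - ((j:ℕ):ℂ)) * z) with hx
  have hterm : ∀ b : Fin d, Complex.exp (((b:ℕ):ℂ) * ((((l:ℕ):ℂ) - ((j:ℕ):ℂ)) * z)) = x ^ (b:ℕ) := by
    intro b; rw [hx, ← Complex.exp_nat_mul]
  rw [Finset.sum_congr rfl (fun b _ => hterm b), Fin.sum_univ_eq_sum_range (fun n => x ^ n)]
  have hdC : (d : ℂ) ≠ 0 := Nat.cast_ne_zero.mpr hd.ne'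
  have hxd : x ^ d = 1 := by
    rw [hx, ← Complex.exp_nat_mul]
    have h1 : (d : ℂ) * (((((l:ℕ):ℂ)) - ((j:ℕ):ℂ)) * z) = (((l:ℤ) - (j:ℤ) : ℤ) : ℂ) * (2 * Real.pi * Complex.I) := by
      rw [hz]; push_cast; field_simp
    rw [h1, Complex.exp_int_mul_two_pi_mul_I]
  by_cases hjl : j = l
  · subst hjl
    simp [hx, sub_self]
  · rw [if_neg hjl]
    have hx1 : x ≠ 1 := by
      intro h
      rw [hx, Complex.exp_eq_one_iff] at h
      obtain ⟨n, hn⟩ := h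
      rw [hz] at hn
      have hC : (((l:ℤ) - (j:ℤ) : ℤ) : ℂ) = (((n * d : ℤ)) : ℂ) := by
        push_cast
        field_simp at hn
        have h2 : (2 * (Real.pi:ℂ) * Complex.I) ≠ 0 := by
          simp [Real.pi_ne_zero, Complex.I_ne_zero]
        have hn' : (((l:ℕ):ℂ) - ((j:ℕ):ℂ)) * (2 * (Real.pi:ℂ) * Complex.I)
            = ((n:ℂ) * (d:ℂ)) * (2 * (Real.pi:ℂ) * Complex.I) := by linear_combination (2 * (Real.pi:ℂ) * Complex.I) * hn
        exact mul_right_cancel₀ h2 hn'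
      have hZ : (l:ℤ) - (j:ℤ) = n * d := by exact_mod_cast hC
      have hdvd : (d:ℤ) ∣ ((l:ℤ) - (j:ℤ)) := ⟨n, by linarith [hZ]⟩
      have habs : |(l:ℤ) - (j:ℤ)| < d := by
        have := l.isLt; have := j.isLt
        rw [abs_lt]; constructor <;> omega
      have h0 := Int.eq_zero_of_abs_lt_dvd hdvd habs
      have : (l:ℕ) = (j:ℕ) := by omega
      exact hjl (Fin.ext this.symm)
    rw [geom_sum_eq hx1, hxd, sub_self, zero_div]


lemma ortho (d : ℕ) (hd : 0 < d) (i j k l : Fin d) :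
    ∑ a : Fin d, ∑ b : Fin d,
      star ((shiftX d ^ (i:ℕ) * clockZ d ^ (j:ℕ)) a b) * ((shiftX d ^ (k:ℕ) * clockZ d ^ (l:ℕ)) a b)
      = if i = k ∧ j = l then (d : ℂ) else 0 := by
  haveI : NeZero d := ⟨hd.ne'⟩
  simp only [clockZ_mul_apply, shiftX_pow_apply d hd]
  by_cases hik : i = k
  · subst hik
    have hrhs : (if i = i ∧ j = l then (d:ℂ) else 0) = (if j = l then (d:ℂ) else 0) := by
      simp
    rw [hrhs]
    have hterm : ∀ (P : Prop) [Decidable P] (u v : ℂ),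
        star ((if P then (1:ℂ) else 0) * u) * ((if P then (1:ℂ) else 0) * v)
          = if P then star u * v else 0 := by
      intro P _ u v; split <;> simp
    simp only [hterm]
    set F : Fin d → ℂ := fun b =>
      star (Complex.exp (2 * Real.pi * Complex.I * (b:ℕ) / d) ^ (j:ℕ)) *
        Complex.exp (2 * Real.pi * Complex.I * (b:ℕ) / d) ^ (l:ℕ) with hF
    have hinner : ∀ a : Fin d,
        (∑ b : Fin d, if ((a:ℕ) + (i:ℕ)) % d = (b:ℕ) then F b else 0) = F (a + i) := by
      intro a
      have hc : ∀ b : Fin d, (if ((a:ℕ) + (i:ℕ)) % d = (b:ℕ) then F b else 0)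
          = (if (a + i : Fin d) = b then F b else 0) := by
        intro b
        exact if_congr (by rw [Fin.ext_iff, Fin.val_add]) rfl rfl
      rw [Finset.sum_congr rfl (fun b _ => hc b), Finset.sum_ite_eq]
      simp
    rw [Finset.sum_congr rfl (fun a _ => hinner a)]
    rw [Fintype.sum_equiv (Equiv.addRight i) (fun a => F (a + i)) F (fun a => rfl)]
    have hstar : ∀ b : Fin d, F b
        = Complex.exp (((b:ℕ):ℂ) * ((((l:ℕ):ℂ) - ((j:ℕ):ℂ)) * (2 * Real.pi * Complex.I / d))) := by
      intro b
      rw [hF]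
      simp only
      rw [← Complex.exp_nat_mul, ← Complex.exp_nat_mul, Complex.star_def, ← Complex.exp_conj,
        ← Complex.exp_add]
      congr 1
      have hconj : (starRingEnd ℂ) (((j:ℕ):ℂ) * (2 * Real.pi * Complex.I * (b:ℕ) / d))
          = -(((j:ℕ):ℂ) * (2 * Real.pi * Complex.I * (b:ℕ) / d)) := by
        simp [map_div₀, map_ofNat]
        ring
      rw [hconj]
      ring
    rw [Finset.sum_congr rfl (fun b _ => hstar b), exp_pow_sum d hd j l]
  · rw [if_neg (fun h => hik h.1)]
    apply Finset.sum_eq_zero; intro a _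
    apply Finset.sum_eq_zero; intro b _
    by_cases h1 : ((a:ℕ) + (i:ℕ)) % d = (b:ℕ)
    · have h2 : ¬ (((a:ℕ) + (k:ℕ)) % d = (b:ℕ)) := by
        intro h2
        apply hik
        have : ((a:ℕ) + (i:ℕ)) % d = ((a:ℕ) + (k:ℕ)) % d := h1.trans h2.symm
        have hmod : (i:ℕ) % d = (k:ℕ) % d := Nat.ModEq.add_left_cancel' (a:ℕ) this
        exact Fin.ext (by rwa [Nat.mod_eq_of_lt i.isLt, Nat.mod_eq_of_lt k.isLt] at hmod)
      rw [if_neg h2, zero_mul, mul_zero]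
    · rw [if_neg h1, zero_mul, star_zero, zero_mul]


noncomputable def vec (d : ℕ) (i j : Fin d) : Fin d × Fin d → ℂ :=
  fun a => ((1 / Real.sqrt d : ℝ) : ℂ) * (shiftX d ^ (i:ℕ) * clockZ d ^ (j:ℕ)) a.1 a.2


lemma inner_vec (d : ℕ) (hd : 0 < d) (i j k l : Fin d) :
    ∑ a : Fin d × Fin d, star (vec d i j a) * vec d k l a
      = if i = k ∧ j = l then 1 else 0 := by
  have hdC : (d : ℂ) ≠ 0 := Nat.cast_ne_zero.mpr hd.ne'
  have hcc : (((1 / Real.sqrt d : ℝ):ℂ)) * ((1 / Real.sqrt d : ℝ):ℂ) = ((d:ℂ))⁻¹ := by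
    rw [← Complex.ofReal_mul, div_mul_div_comm, one_mul,
      Real.mul_self_sqrt (Nat.cast_nonneg d)]
    push_cast
    rw [one_div]
  have hterm : ∀ a : Fin d × Fin d, star (vec d i j a) * vec d k l a
      = ((d:ℂ))⁻¹ * (star ((shiftX d ^ (i:ℕ) * clockZ d ^ (j:ℕ)) a.1 a.2) *
          ((shiftX d ^ (k:ℕ) * clockZ d ^ (l:ℕ)) a.1 a.2)) := by
    intro a
    simp only [_root_.vec, star_mul', Complex.star_def, Complex.conj_ofReal]
    rw [← hcc]; ring
  rw [Finset.sum_congr rfl (fun a _ => hterm a), ← Finset.mul_sum,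
    Fintype.sum_prod_type, ortho d hd i j k l]
  split
  · rw [inv_mul_cancel₀ hdC]
  · rw [mul_zero]


lemma trace_jam (d : ℕ) (hd : 0 < d) (p q : Fin d → Fin d → ℝ) :
    trace (pauliJam d p * pauliJam d q) = ((∑ i, ∑ j, p i j * q i j : ℝ) : ℂ) := by
  have hJ : ∀ r : Fin d → Fin d → ℝ, pauliJam d r =
      ∑ i, ∑ j, (r i j : ℂ) •
        (Matrix.of fun a b => vec d i j a * star (vec d i j b)) := fun r => rfl
  have htr : ∀ i j k l : Fin d,
      trace ((Matrix.of fun a b => vec d i j a * star (vec d i j b)) *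
          (Matrix.of fun a b => vec d k l a * star (vec d k l b)))
        = if i = k ∧ j = l then 1 else 0 := by
    intro i j k l
    have : trace ((Matrix.of fun a b => vec d i j a * star (vec d i j b)) *
          (Matrix.of fun a b => vec d k l a * star (vec d k l b)))
        = (∑ a, star (vec d k l a) * vec d i j a) * (∑ a, star (vec d i j a) * vec d k l a) := by
      rw [Matrix.trace, Finset.sum_mul_sum]
      simp only [Matrix.diag, Matrix.mul_apply, Matrix.of_apply]
      refine Finset.sum_congr rfl (fun x _ => Finset.sum_congr rfl (fun y _ => by ring))
    rw [this, inner_vec d hd k l i j, inner_vec d hd i j k l]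
    by_cases h : i = k ∧ j = l
    · obtain ⟨h1, h2⟩ := h; subst h1; subst h2; simp
    · rw [if_neg h, mul_zero]
  rw [hJ, hJ]
  simp only [Finset.sum_mul, Finset.mul_sum, trace_sum, smul_mul_assoc, mul_smul_comm,
    trace_smul, smul_eq_mul, htr]
  push_cast
  refine Finset.sum_congr rfl (fun i _ => Finset.sum_congr rfl (fun j _ => ?_))
  simp [mul_ite, mul_zero, mul_one, ite_and, Finset.sum_ite_eq]
  ring

theorem superfidelity_generalized_pauli (d : ℕ) (hd : 0 < d)
    (p q : Fin d → Fin d → ℝ)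
    (hp0 : ∀ i j, 0 ≤ p i j) (hq0 : ∀ i j, 0 ≤ q i j)
    (hp1 : ∑ i, ∑ j, p i j = 1) (hq1 : ∑ i, ∑ j, q i j = 1) :
    sG (pauliJam d p) (pauliJam d q) =
      (∑ i, ∑ j, p i j * q i j) +
        Real.sqrt (1 - ∑ i, ∑ j, (p i j) ^ 2) *
          Real.sqrt (1 - ∑ i, ∑ j, (q i j) ^ 2) := by
  have h1 := trace_jam d hd p q
  have h2 := trace_jam d hd p p
  have h3 := trace_jam d hd q q
  rw [sG, h1, h2, h3, Complex.ofReal_re, Complex.ofReal_re, Complex.ofReal_re]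
  simp [pow_two]
end

section
/- For the Werner-Holevo (transpose depolarizing) channels κᵀ_{d,p} and κᵀ_{d,q} with p, q ∈ [-1/(d-1), 1/(d+1)], the superfidelity between their Jamiołkowski states equals (1/d²)·(1 + (d²-1)pq + (d²-1)·√((1-p²)(1-q²))). -/
open Matrix

noncomputable def swapM (d : ℕ) : Matrix (Fin d × Fin d) (Fin d × Fin d) ℂ :=
  Matrix.of fun a b => if a.1 = b.2 ∧ a.2 = b.1 then (1 : ℂ) else 0

lemma swap_mul_swap (d : ℕ) : swapM d * swapM d = 1 := by
  ext a b
  simp [swapM, Matrix.mul_apply, Matrix.one_apply, Fintype.sum_prod_type, Finset.sum_ite_eq,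
    Finset.sum_ite_eq', ite_and, Prod.ext_iff]

lemma trace_swap (d : ℕ) : trace (swapM d) = d := by
  have h : ∀ a : Fin d × Fin d, (a.1 = a.2 ∧ a.2 = a.1) ↔ a.1 = a.2 :=
    fun a => ⟨fun h => h.1, fun h => ⟨h, h.symm⟩⟩
  simp only [swapM, trace, Matrix.diag, Matrix.of_apply, h]
  rw [Fintype.sum_prod_type]
  simp [Finset.sum_ite_eq]

/-- Jamiołkowski state of the Werner-Holevo (transpose depolarizing) channel
κᵀ_{d,p}: ρ = (p/d)·S + (1-p)·𝟙/d², where S is the swap operator. -/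
noncomputable def wernerHolevoJam (d : ℕ) (p : ℝ) :
    Matrix (Fin d × Fin d) (Fin d × Fin d) ℂ :=
  ((p : ℂ) / d) • (Matrix.of fun a b =>
      if a.1 = b.2 ∧ a.2 = b.1 then (1 : ℂ) else 0) +
    (((1 - p : ℝ) : ℂ) / (d ^ 2 : ℂ)) • (1 : Matrix (Fin d × Fin d) (Fin d × Fin d) ℂ)

lemma whj_eq (d : ℕ) (p : ℝ) :
    wernerHolevoJam d p = ((p : ℂ) / d) • swapM d + (((1 - p : ℝ) : ℂ) / (d ^ 2 : ℂ)) • 1 := rfl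

lemma tr_mul_whj (d : ℕ) (hd : d ≠ 0) (p q : ℝ) :
    trace (wernerHolevoJam d p * wernerHolevoJam d q) =
      (((1 + ((d : ℝ) ^ 2 - 1) * p * q) / (d : ℝ) ^ 2 : ℝ) : ℂ) := by
  have hdC : (d : ℂ) ≠ 0 := Nat.cast_ne_zero.mpr hd
  rw [whj_eq, whj_eq]
  simp only [add_mul, mul_add, smul_mul_assoc, Matrix.mul_smul, mul_one, one_mul,
    swap_mul_swap]
  simp only [trace_add, trace_smul, trace_one, trace_swap, smul_eq_mul]
  have hcard : (Fintype.card (Fin d × Fin d) : ℂ) = (d : ℂ) ^ 2 := by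
    simp [Fintype.card_prod]; ring
  rw [hcard]
  push_cast
  rw [eq_comm, div_eq_iff (pow_ne_zero 2 hdC)]
  field_simp
  have h1 : (d : ℂ) ^ 9 * ((d : ℂ))⁻¹ ^ 9 = 1 := by
    rw [inv_pow]; exact mul_inv_cancel₀ (pow_ne_zero 9 hdC)
  have h2 : (d : ℂ) ^ 11 * ((d : ℂ))⁻¹ ^ 9 = (d : ℂ) ^ 2 := by
    rw [inv_pow, show (11 : ℕ) = 9 + 2 by rfl, pow_add]
    field_simp
  ring

theorem superfidelity_werner_holevo (d : ℕ) (hd : 2 ≤ d)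
    (p q : ℝ)
    (hp : -(1 / ((d : ℝ) - 1)) ≤ p ∧ p ≤ 1 / ((d : ℝ) + 1))
    (hq : -(1 / ((d : ℝ) - 1)) ≤ q ∧ q ≤ 1 / ((d : ℝ) + 1)) :
    sG (wernerHolevoJam d p) (wernerHolevoJam d q) =
      (1 / (d ^ 2 : ℝ)) *
        (1 + ((d ^ 2 : ℝ) - 1) * p * q +
          ((d ^ 2 : ℝ) - 1) * Real.sqrt ((1 - p ^ 2) * (1 - q ^ 2))) := by
  have hd0 : d ≠ 0 := by omega
  have hdR : (2 : ℝ) ≤ (d : ℝ) := by exact_mod_cast hd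
  have hd2 : (0 : ℝ) < (d : ℝ) ^ 2 := by positivity
  have hA : (0 : ℝ) ≤ ((d : ℝ) ^ 2 - 1) / (d : ℝ) ^ 2 := by
    apply div_nonneg _ (le_of_lt hd2); nlinarith
  -- bounds
  have habs : ∀ r : ℝ, -(1 / ((d : ℝ) - 1)) ≤ r → r ≤ 1 / ((d : ℝ) + 1) →
      (0 : ℝ) ≤ 1 - r ^ 2 := by
    intro r h1 h2
    have hm : (1 : ℝ) ≤ (d : ℝ) - 1 := by linarith
    have h1' : -(1 : ℝ) ≤ r := by
      have : 1 / ((d : ℝ) - 1) ≤ 1 := by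
        rw [div_le_one (by linarith)]; linarith
      linarith
    have h2' : r ≤ 1 := by
      have : 1 / ((d : ℝ) + 1) ≤ 1 := by
        rw [div_le_one (by linarith)]; linarith
      linarith
    nlinarith
  have hp2 : (0 : ℝ) ≤ 1 - p ^ 2 := habs p hp.1 hp.2
  have hq2 : (0 : ℝ) ≤ 1 - q ^ 2 := habs q hq.1 hq.2
  have key : ∀ r s : ℝ, 1 - ((1 + ((d : ℝ) ^ 2 - 1) * r * s) / (d : ℝ) ^ 2) =
      ((d : ℝ) ^ 2 - 1) / (d : ℝ) ^ 2 * (1 - r * s) := by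
    intro r s; field_simp; ring
  rw [sG, tr_mul_whj d hd0, tr_mul_whj d hd0, tr_mul_whj d hd0, Complex.ofReal_re,
    Complex.ofReal_re, Complex.ofReal_re]
  have hpp : 1 - (1 + ((d : ℝ) ^ 2 - 1) * p * p) / (d : ℝ) ^ 2 =
      ((d : ℝ) ^ 2 - 1) / (d : ℝ) ^ 2 * (1 - p ^ 2) := by rw [key]; ring_nf
  have hqq : 1 - (1 + ((d : ℝ) ^ 2 - 1) * q * q) / (d : ℝ) ^ 2 =
      ((d : ℝ) ^ 2 - 1) / (d : ℝ) ^ 2 * (1 - q ^ 2) := by rw [key]; ring_nf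
  rw [hpp, hqq, Real.sqrt_mul hA, Real.sqrt_mul hA]
  have hsq : Real.sqrt (((d : ℝ) ^ 2 - 1) / (d : ℝ) ^ 2) *
      Real.sqrt (1 - p ^ 2) *
      (Real.sqrt (((d : ℝ) ^ 2 - 1) / (d : ℝ) ^ 2) * Real.sqrt (1 - q ^ 2)) =
      ((d : ℝ) ^ 2 - 1) / (d : ℝ) ^ 2 * Real.sqrt ((1 - p ^ 2) * (1 - q ^ 2)) := by
    rw [Real.sqrt_mul hp2]
    rw [show Real.sqrt (((d:ℝ)^2-1)/(d:ℝ)^2) * Real.sqrt (1-p^2) *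
        (Real.sqrt (((d:ℝ)^2-1)/(d:ℝ)^2) * Real.sqrt (1-q^2)) =
        (Real.sqrt (((d:ℝ)^2-1)/(d:ℝ)^2) * Real.sqrt (((d:ℝ)^2-1)/(d:ℝ)^2)) *
        (Real.sqrt (1-p^2) * Real.sqrt (1-q^2)) by ring,
      Real.mul_self_sqrt hA]
  rw [hsq]
  field_simp
end
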